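/- Let K_i ∈ ℝ^{(m_i+…+m_N)×n} and L_i ∈ ℝ^{n×(p_1+…+p_i)} (i = 1,…,N) be arbitrary gains. Then for every i ∈ {1,…,N} and every s ∈ ℂ not in the spectrum of 𝒜, the matrix 𝒦_i (sI − 𝒜)^{-1} ℒ_i ∈ ℂ^{(m_i+…+m_N)×(p_1+…+p_i)} is zero. (This is the identity P′_{i,i} = 0, the key step showing that the proposed controller satisfies the optimality conditions of the triangular H₂ problem.) -/

import Mathlib

open Matrix

namespace TriLQG

noncomputable section

variable {N : ℕ}

/-- Index type of an `(N+1)`-block partitioned coordinate space with block sizes `d`. -/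
abbrev Idx {N : ℕ} (d : Fin (N+1) → ℕ) : Type := Σ k : Fin (N+1), Fin (d k)

/-- Indices belonging to blocks `i, i+1, …, N`. -/
abbrev IdxGe {N : ℕ} (d : Fin (N+1) → ℕ) (i : Fin (N+1)) : Type := {x : Idx d // i ≤ x.1}

/-- Indices belonging to blocks `0, 1, …, i`. -/
abbrev IdxLe {N : ℕ} (d : Fin (N+1) → ℕ) (i : Fin (N+1)) : Type := {x : Idx d // x.1 ≤ i}

/-- The selector matrix `E^{↓i}` (columns of the identity for blocks `i,…,N`). -/
def padGe (d : Fin (N+1) → ℕ) (i : Fin (N+1)) : Matrix (Idx d) (IdxGe d i) ℝ :=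
  Matrix.of fun r c => if r = (c : Idx d) then 1 else 0

/-- The selector matrix `E^{↑i}` (columns of the identity for blocks `0,…,i`). -/
def padLe (d : Fin (N+1) → ℕ) (i : Fin (N+1)) : Matrix (Idx d) (IdxLe d i) ℝ :=
  Matrix.of fun r c => if r = (c : Idx d) then 1 else 0

/-- Complexification of a real matrix. -/
def mc {α β : Type*} (M : Matrix α β ℝ) : Matrix α β ℂ := M.map Complex.ofReal

/-- A real square matrix is Hurwitz if its (complex) spectrum lies in the open left half plane. -/
def IsHurwitz {t : Type*} [Fintype t] [DecidableEq t] (M : Matrix t t ℝ) : Prop :=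
  ∀ z ∈ spectrum ℂ (mc M), z.re < 0

open Classical in
/-- The (unique, symmetric, positive semidefinite) square root of a positive semidefinite
real matrix; junk value `0` if the matrix is not positive semidefinite. -/
def msqrt {t : Type*} [Fintype t] [DecidableEq t] (M : Matrix t t ℝ) : Matrix t t ℝ :=
  if h : M.PosSemidef then
    (h.1.eigenvectorUnitary : Matrix t t ℝ) *
      diagonal ((RCLike.ofReal : ℝ → ℝ) ∘ Real.sqrt ∘ h.1.eigenvalues) *
      (star h.1.eigenvectorUnitary : Matrix t t ℝ)
  else 0

/-- Full column rank. -/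
def FullColRank {α β : Type*} [Fintype β] {R : Type*} [CommRing R] (M : Matrix α β R) : Prop :=
  M.rank = Fintype.card β

/-- Full row rank. -/
def FullRowRank {α β : Type*} [Fintype α] [Fintype β] {R : Type*} [CommRing R]
    (M : Matrix α β R) : Prop :=
  M.rank = Fintype.card α

/-- `ARE_p(Ã,B̃,F̃,H̃)` together with its gain: `X` is a symmetric solution of the
control algebraic Riccati equation and `K` is the associated gain. -/
def AREp {n' m' q' : Type*} [Fintype n'] [Fintype m'] [Fintype q'] [DecidableEq m']
    (At : Matrix n' n' ℝ) (Bt : Matrix n' m' ℝ) (Ft : Matrix q' n' ℝ) (Ht : Matrix q' m' ℝ)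
    (X : Matrix n' n' ℝ) (K : Matrix m' n' ℝ) : Prop :=
  X.IsSymm ∧
  Atᵀ * X + X * At - (X * Bt + Ftᵀ * Ht) * (Htᵀ * Ht)⁻¹ * (X * Bt + Ftᵀ * Ht)ᵀ + Ftᵀ * Ft = 0 ∧
  K = -((Htᵀ * Ht)⁻¹ * (X * Bt + Ftᵀ * Ht)ᵀ)

/-- `ARE_d(Ã,C̃,W̃,Ṽ)` together with its gain. -/
def AREd {n' p' r' : Type*} [Fintype n'] [Fintype p'] [Fintype r'] [DecidableEq p']
    (At : Matrix n' n' ℝ) (Ct : Matrix p' n' ℝ) (Wt : Matrix n' r' ℝ) (Vt : Matrix p' r' ℝ)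
    (Y : Matrix n' n' ℝ) (L : Matrix n' p' ℝ) : Prop :=
  Y.IsSymm ∧
  At * Y + Y * Atᵀ - (Ct * Y + Vt * Wtᵀ)ᵀ * (Vt * Vtᵀ)⁻¹ * (Ct * Y + Vt * Wtᵀ) + Wt * Wtᵀ = 0 ∧
  L = -((Ct * Y + Vt * Wtᵀ)ᵀ * (Vt * Vtᵀ)⁻¹)

/-- Lower block triangular sparsity. -/
def IsLBT {N : ℕ} {d e : Fin (N+1) → ℕ} (M : Matrix (Idx d) (Idx e) ℝ) : Prop :=
  ∀ a : Idx d, ∀ b : Idx e, a.1 < b.1 → M a b = 0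

/-- The data of the `(N+1)`-player triangular plant. -/
structure Plant (N : ℕ) where
  nd : Fin (N+1) → ℕ
  md : Fin (N+1) → ℕ
  pd : Fin (N+1) → ℕ
  q : ℕ
  r : ℕ
  A : Matrix (Idx nd) (Idx nd) ℝ
  B : Matrix (Idx nd) (Idx md) ℝ
  C : Matrix (Idx pd) (Idx nd) ℝ
  F : Matrix (Fin q) (Idx nd) ℝ
  H : Matrix (Fin q) (Idx md) ℝ
  W : Matrix (Idx nd) (Fin r) ℝ
  V : Matrix (Idx pd) (Fin r) ℝ

variable (P : Plant N)

/-- family of controller gains `K_i ∈ ℝ^{(m_i+⋯+m_N)×n}` -/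
abbrev KGains (P : Plant N) : Type := (i : Fin (N+1)) → Matrix (IdxGe P.md i) (Idx P.nd) ℝ

/-- family of observer gains `L_i ∈ ℝ^{n×(p_1+⋯+p_i)}` -/
abbrev LGains (P : Plant N) : Type := (i : Fin (N+1)) → Matrix (Idx P.nd) (IdxLe P.pd i) ℝ

/-- family of symmetric matrices `X_i` (or `Y_i`) -/
abbrev SFam (P : Plant N) : Type := Fin (N+1) → Matrix (Idx P.nd) (Idx P.nd) ℝ

def Bdown (i : Fin (N+1)) : Matrix (Idx P.nd) (IdxGe P.md i) ℝ := P.B.submatrix id Subtype.val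
def Hdown (i : Fin (N+1)) : Matrix (Fin P.q) (IdxGe P.md i) ℝ := P.H.submatrix id Subtype.val
def Cup (i : Fin (N+1)) : Matrix (IdxLe P.pd i) (Idx P.nd) ℝ := P.C.submatrix Subtype.val id
def Vup (i : Fin (N+1)) : Matrix (IdxLe P.pd i) (Fin P.r) ℝ := P.V.submatrix Subtype.val id

/-- `Ψ_{↓i}^{↓i} = (H^{↓i})ᵀ H^{↓i}` -/
def Psidd (i : Fin (N+1)) : Matrix (IdxGe P.md i) (IdxGe P.md i) ℝ := (Hdown P i)ᵀ * Hdown P i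

/-- `Φ_{↑j}^{↑j} = V_{↑j} (V_{↑j})ᵀ` -/
def Phiuu (j : Fin (N+1)) : Matrix (IdxLe P.pd j) (IdxLe P.pd j) ℝ := Vup P j * (Vup P j)ᵀ

/-- The coupled Riccati system (2a)–(2d) of the paper. -/
def Coupled (X : SFam P) (K : KGains P) (Y : SFam P) (L : LGains P) : Prop :=
  AREp P.A (Bdown P 0) P.F (Hdown P 0) (X 0) (K 0) ∧
  (∀ t : Fin N,
    AREp (P.A + L t.castSucc * Cup P t.castSucc) (Bdown P t.succ)
      (-(Hdown P t.castSucc * K t.castSucc)) (Hdown P t.succ) (X t.succ) (K t.succ)) ∧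
  AREd P.A (Cup P (Fin.last N)) P.W (Vup P (Fin.last N)) (Y (Fin.last N)) (L (Fin.last N)) ∧
  (∀ t : Fin N,
    AREd (P.A + Bdown P t.succ * K t.succ) (Cup P t.castSucc)
      (-(L t.succ * Vup P t.succ)) (Vup P t.castSucc) (Y t.castSucc) (L t.castSucc))

/-- `A^{KL}_{k+1,k}` for `k = 0, 1, …, N+1` (`k = 0` gives `A+BK_1`,
`k = N+1` gives `A+L_N C`). -/
def AKL (K : KGains P) (L : LGains P) (k : Fin (N+2)) : Matrix (Idx P.nd) (Idx P.nd) ℝ :=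
  if hk : k.1 < N + 1 then
    (if k.1 = 0 then P.A + Bdown P 0 * K 0
     else
       have h1 : k.1 - 1 < N + 1 := by omega
       P.A + Bdown P ⟨k.1, hk⟩ * K ⟨k.1, hk⟩ +
         L ⟨k.1 - 1, h1⟩ * Cup P ⟨k.1 - 1, h1⟩)
  else P.A + L (Fin.last N) * Cup P (Fin.last N)

/-- index set of the `n(N+1)`-dimensional controller state space -/
abbrev CtrIx {N : ℕ} (nd : Fin (N+1) → ℕ) : Type := Fin (N+1) × Idx nd

/-- index set of the `n(N+2)`-dimensional closed-loop state space:
`N+1` controller blocks and one plant block -/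
abbrev BigIx {N : ℕ} (nd : Fin (N+1) → ℕ) : Type := CtrIx nd ⊕ Idx nd

/-- the incidence matrix `ζ` -/
def zetaN (nd : Fin (N+1) → ℕ) : Matrix (CtrIx nd) (CtrIx nd) ℝ :=
  Matrix.of fun x y => if y.1 ≤ x.1 ∧ x.2 = y.2 then 1 else 0

/-- block diagonal matrix -/
def blkDiagN {nd : Fin (N+1) → ℕ} (f : Fin (N+1) → Matrix (Idx nd) (Idx nd) ℝ) :
    Matrix (CtrIx nd) (CtrIx nd) ℝ :=
  Matrix.of fun x y => if x.1 = y.1 then f x.1 x.2 y.2 else 0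

/-- `A_K` of the optimal controller realization -/
def AK (K : KGains P) (L : LGains P) : Matrix (CtrIx P.nd) (CtrIx P.nd) ℝ :=
  blkDiagN (fun _ => P.A) + blkDiagN (fun k => L k * Cup P k) +
    zetaN P.nd * blkDiagN (fun k => Bdown P k * K k) * (zetaN P.nd)⁻¹

/-- `B_K` of the optimal controller realization -/
def BK (L : LGains P) : Matrix (CtrIx P.nd) (Idx P.pd) ℝ :=
  Matrix.of fun x c => -((L x.1 * (padLe P.pd x.1)ᵀ) x.2 c)

/-- `C_K` of the optimal controller realization -/
def CK (K : KGains P) : Matrix (Idx P.md) (CtrIx P.nd) ℝ :=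
  (Matrix.of fun rr (x : CtrIx P.nd) => (padGe P.md x.1 * K x.1) rr x.2) * (zetaN P.nd)⁻¹

/-- closed-loop `𝒜` -/
def Acal (K : KGains P) (L : LGains P) : Matrix (BigIx P.nd) (BigIx P.nd) ℝ :=
  Matrix.fromBlocks (AK P K L) (BK P L * P.C) (P.B * CK P K) P.A

/-- closed-loop `ℬ` -/
def Bcal : Matrix (BigIx P.nd) (Idx P.md) ℝ :=
  Matrix.of fun x j => Sum.elim (fun _ => (0:ℝ)) (fun a => P.B a j) x

/-- closed-loop `𝒲` -/
def Wcal (L : LGains P) : Matrix (BigIx P.nd) (Fin P.r) ℝ :=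
  Matrix.of fun x j => Sum.elim (fun y => (BK P L * P.V) y j) (fun a => P.W a j) x

/-- closed-loop `ℱ` -/
def Fcal (K : KGains P) : Matrix (Fin P.q) (BigIx P.nd) ℝ :=
  Matrix.of fun i x => Sum.elim (fun y => (P.H * CK P K) i y) (fun a => P.F i a) x

/-- closed-loop `𝒞` -/
def Ccal : Matrix (Idx P.pd) (BigIx P.nd) ℝ :=
  Matrix.of fun i x => Sum.elim (fun _ => (0:ℝ)) (fun a => P.C i a) x

/-- block index of a closed-loop index -/
def blkOf {nd : Fin (N+1) → ℕ} (x : BigIx nd) : Fin (N+2) :=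
  Sum.elim (fun y => y.1.castSucc) (fun _ => Fin.last (N+1)) x

/-- within-block state of a closed-loop index -/
def stOf {nd : Fin (N+1) → ℕ} (x : BigIx nd) : Idx nd :=
  Sum.elim Prod.snd id x

/-- the incidence matrix `ζ̄` of the `(N+2)`-fold block structure -/
def zetaBar (nd : Fin (N+1) → ℕ) : Matrix (BigIx nd) (BigIx nd) ℝ :=
  Matrix.of fun x y => if blkOf y ≤ blkOf x ∧ stOf x = stOf y then 1 else 0

/-- embedding of a within-block index into the closed-loop index set, at block `k` -/
def emb {nd : Fin (N+1) → ℕ} (k : Fin (N+2)) (a : Idx nd) : BigIx nd :=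
  if h : k.1 < N + 1 then Sum.inl (⟨⟨k.1, h⟩, a⟩ : CtrIx nd) else Sum.inr a

/-- `𝒦_i` of the paper (eq. (9)). -/
def Kcal (K : KGains P) (i : Fin (N+1)) : Matrix (IdxGe P.md i) (BigIx P.nd) ℝ :=
  (padGe P.md i)ᵀ *
    Matrix.of fun (rr : Idx P.md) (x : BigIx P.nd) =>
      Sum.elim
        (fun y : CtrIx P.nd =>
          if hl : y.1.1 < N then
            (if y.1 < i then (0:ℝ)
             else
               have h1 : y.1.1 + 1 < N + 1 := by omega
               (padGe P.md ⟨y.1.1 + 1, h1⟩ * K ⟨y.1.1 + 1, h1⟩ -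
                   padGe P.md y.1 * K y.1) rr y.2)
          else (-(padGe P.md (Fin.last N) * K (Fin.last N))) rr y.2)
        (fun a => (padGe P.md i * K i) rr a) x

/-- `ℒ_j` of the paper (eq. (10)). -/
def Lcal (L : LGains P) (j : Fin (N+1)) : Matrix (BigIx P.nd) (IdxLe P.pd j) ℝ :=
  Matrix.of fun x c =>
    Sum.elim
      (fun y : CtrIx P.nd =>
        if y.1 < j then (L y.1 * (padLe P.pd y.1)ᵀ * padLe P.pd j) y.2 c else (L j) y.2 c)
      (fun a => (L j) a c) x

/-- `J̃_i` of the paper (eq. (11)). -/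
def Jtil (nd : Fin (N+1) → ℕ) (i : Fin (N+1)) : Matrix (Idx nd) (BigIx nd) ℝ :=
  Matrix.of fun a x =>
    Sum.elim
      (fun y : CtrIx nd => if 0 < i.1 ∧ y.1.1 = i.1 - 1 ∧ a = y.2 then (1:ℝ) else 0)
      (fun b => if a = b then (-1:ℝ) else 0) x

/-- `Ĵ_j` of the paper (eq. (11)). -/
def Jhat (nd : Fin (N+1) → ℕ) (j : Fin (N+1)) : Matrix (BigIx nd) (Idx nd) ℝ :=
  Matrix.of fun x a =>
    Sum.elim
      (fun y : CtrIx nd => if j < y.1 ∧ y.2 = a then (1:ℝ) else 0)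
      (fun b => if b = a then (1:ℝ) else 0) x

/-- `Γ_i = −(Ψ_{↓i}^{↓i})^{1/2} 𝒦_i` for `i ≥ 1` (Lemma 2 of the paper). -/
def Gam (K : KGains P) (i : Fin (N+1)) : Matrix (IdxGe P.md i) (BigIx P.nd) ℝ :=
  -(msqrt (Psidd P i) * Kcal P K i)

/-- `Λ_j = −ℒ_j (Φ_{↑j}^{↑j})^{1/2}` for `j ≤ N` (Lemma 2 of the paper). -/
def Lam (L : LGains P) (j : Fin (N+1)) : Matrix (BigIx P.nd) (IdxLe P.pd j) ℝ :=
  -(Lcal P L j * msqrt (Phiuu P j))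

/-- the inner factor `U_1(s)` -/
def Uone (K : KGains P) (L : LGains P) (s : ℂ) : Matrix (Fin P.q) (IdxGe P.md 0) ℂ :=
  mc (P.F + Hdown P 0 * K 0) * (s • 1 - mc (AKL P K L 0))⁻¹ * mc (Bdown P 0) *
      (mc (msqrt (Psidd P 0)))⁻¹ +
    mc (Hdown P 0) * (mc (msqrt (Psidd P 0)))⁻¹

/-- the inner factor `U_{t+2}(s)` (paper indexing), mapping block level `t+1` to `t` -/
def Usucc (K : KGains P) (L : LGains P) (t : Fin N) (s : ℂ) :
    Matrix (IdxGe P.md t.castSucc) (IdxGe P.md t.succ) ℂ :=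
  mc (msqrt (Psidd P t.castSucc)) *
      mc ((padGe P.md t.castSucc)ᵀ *
        (padGe P.md t.succ * K t.succ - padGe P.md t.castSucc * K t.castSucc)) *
      (s • 1 - mc (AKL P K L t.succ.castSucc))⁻¹ * mc (Bdown P t.succ) *
      (mc (msqrt (Psidd P t.succ)))⁻¹ +
    mc (msqrt (Psidd P t.castSucc)) * mc ((padGe P.md t.castSucc)ᵀ * padGe P.md t.succ) *
      (mc (msqrt (Psidd P t.succ)))⁻¹

/-- the co-inner factor `V_{N+1}(s)` (paper indexing: the last one) -/
def Vlast (K : KGains P) (L : LGains P) (s : ℂ) :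
    Matrix (IdxLe P.pd (Fin.last N)) (Fin P.r) ℂ :=
  (mc (msqrt (Phiuu P (Fin.last N))))⁻¹ * mc (Cup P (Fin.last N)) *
      (s • 1 - mc (AKL P K L (Fin.last (N+1))))⁻¹ *
      mc (P.W + L (Fin.last N) * Vup P (Fin.last N)) +
    (mc (msqrt (Phiuu P (Fin.last N))))⁻¹ * mc (Vup P (Fin.last N))

/-- the co-inner factor `V_{t+1}(s)` (paper indexing), for `t+1 ≤ N` -/
def Vmid (K : KGains P) (L : LGains P) (t : Fin N) (s : ℂ) :
    Matrix (IdxLe P.pd t.castSucc) (IdxLe P.pd t.succ) ℂ :=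
  (mc (msqrt (Phiuu P t.castSucc)))⁻¹ * mc (Cup P t.castSucc) *
      (s • 1 - mc (AKL P K L t.succ.castSucc))⁻¹ *
      mc ((L t.castSucc * (padLe P.pd t.castSucc)ᵀ - L t.succ * (padLe P.pd t.succ)ᵀ) *
        padLe P.pd t.succ * msqrt (Phiuu P t.succ)) +
    (mc (msqrt (Phiuu P t.castSucc)))⁻¹ *
      mc ((padLe P.pd t.castSucc)ᵀ * padLe P.pd t.succ * msqrt (Phiuu P t.succ))

/-- the product `U_1(s) U_2(s) ⋯ U_i(s)` -/
def Uprod (K : KGains P) (L : LGains P) (s : ℂ) :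
    (i : Fin (N+1)) → Matrix (Fin P.q) (IdxGe P.md i) ℂ :=
  Fin.induction (motive := fun i => Matrix (Fin P.q) (IdxGe P.md i) ℂ)
    (Uone P K L s) (fun t ih => ih * Usucc P K L t s)

/-- the product `V_j(s) V_{j+1}(s) ⋯ V_{N+1}(s)` -/
def Vprod (K : KGains P) (L : LGains P) (s : ℂ) :
    (j : Fin (N+1)) → Matrix (IdxLe P.pd j) (Fin P.r) ℂ :=
  Fin.reverseInduction (motive := fun j => Matrix (IdxLe P.pd j) (Fin P.r) ℂ)
    (Vlast P K L s) (fun t ih => Vmid P K L t s * ih)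

/-- closed-loop transfer function `G11(s) = ℱ(sI−𝒜)⁻¹𝒲` -/
def G11 (K : KGains P) (L : LGains P) (s : ℂ) : Matrix (Fin P.q) (Fin P.r) ℂ :=
  mc (Fcal P K) * (s • 1 - mc (Acal P K L))⁻¹ * mc (Wcal P L)

/-- closed-loop transfer function `G12(s) = ℱ(sI−𝒜)⁻¹ℬ + H` -/
def G12 (K : KGains P) (L : LGains P) (s : ℂ) : Matrix (Fin P.q) (Idx P.md) ℂ :=
  mc (Fcal P K) * (s • 1 - mc (Acal P K L))⁻¹ * mc (Bcal P) + mc P.H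

/-- closed-loop transfer function `G21(s) = 𝒞(sI−𝒜)⁻¹𝒲 + V` -/
def G21 (K : KGains P) (L : LGains P) (s : ℂ) : Matrix (Idx P.pd) (Fin P.r) ℂ :=
  mc (Ccal P) * (s • 1 - mc (Acal P K L))⁻¹ * mc (Wcal P L) + mc P.V

end

end TriLQG



open Finset

namespace TriAux

lemma teleIco (f : ℕ → ℝ) (l c : ℕ) (h : l ≤ c) :
    ∑ k ∈ Finset.Ico l c, (f (k+1) - f k) = f c - f l := by
  rw [Finset.sum_Ico_eq_sum_range]
  have h2 := Finset.sum_range_sub (fun j => f (l + j)) (c - l)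
  have h3 : ∀ k, f (l + k + 1) - f (l + k) = f (l + (k+1)) - f (l + k) := by
    intro k; rw [Nat.add_assoc]
  calc ∑ k ∈ range (c - l), (f (l + k + 1) - f (l + k))
      = ∑ k ∈ range (c - l), (f (l + (k+1)) - f (l + k)) := by
        exact Finset.sum_congr rfl fun k _ => h3 k
    _ = f (l + (c - l)) - f (l + 0) := h2
    _ = f c - f l := by congr 2 <;> omega

lemma sum_if_Ico (f : ℕ → ℝ) (a b M : ℕ) (h : b ≤ M) :
    ∑ k ∈ range M, (if a ≤ k ∧ k < b then f k else 0) = ∑ k ∈ Ico a b, f k := by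
  have h1 : ∀ k, (if a ≤ k ∧ k < b then f k else 0) = if k ∈ Ico a b then f k else 0 := by
    intro k; simp [Finset.mem_Ico]
  rw [Finset.sum_congr rfl fun k _ => h1 k, Finset.sum_ite_mem]
  congr 1
  rw [Finset.inter_eq_right]
  intro x hx
  simp only [Finset.mem_Ico] at hx
  simp only [Finset.mem_range]
  omega

/-- telescope used for the triangularity of `μ̄ 𝒜 ζ̄`. -/
lemma teleNat (f : ℕ → ℝ) (l c M : ℕ) (hlc : l ≤ c) (hcM : c < M) :
    ∑ k ∈ range M,
      ((if l ≤ k ∧ k ≤ c then f k else 0) - (if l ≤ k ∧ k + 1 ≤ c then f (k+1) else 0))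
      = f l := by
  rw [Finset.sum_sub_distrib]
  have e1 : ∑ k ∈ range M, (if l ≤ k ∧ k ≤ c then f k else 0) = ∑ k ∈ Ico l (c+1), f k := by
    have := sum_if_Ico f l (c+1) M (by omega)
    simpa [Nat.lt_succ_iff] using this
  have e2 : ∑ k ∈ range M, (if l ≤ k ∧ k + 1 ≤ c then f (k+1) else 0)
      = ∑ k ∈ Ico l c, f (k+1) := by
    have := sum_if_Ico (fun k => f (k+1)) l c M (by omega)
    rw [← this]
    exact Finset.sum_congr rfl fun k _ => by
      by_cases h1 : l ≤ k ∧ k + 1 ≤ c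
      · rw [if_pos h1, if_pos ⟨h1.1, by omega⟩]
      · rw [if_neg h1, if_neg (by omega)]
  rw [e1, e2]
  rw [Finset.sum_eq_sum_Ico_succ_bot (by omega : l < c + 1)]
  have e3 : ∑ k ∈ Ico (l+1) (c+1), f k = ∑ k ∈ Ico l c, f (k+1) := by
    rw [Finset.sum_Ico_eq_sum_range, Finset.sum_Ico_eq_sum_range]
    have : (c+1) - (l+1) = c - l := by omega
    rw [this]
    exact Finset.sum_congr rfl fun k _ => by congr 1; omega
  rw [e3]; ring

/-- telescope used for the support of `𝒦_i ζ̄`. -/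
lemma teleK (Pf : ℕ → ℝ) (i N l : ℕ) (hli : l ≤ i) (hiN : i ≤ N) :
    ∑ k ∈ Finset.range (N+2),
      (if l ≤ k then
        (if k < N + 1 then
          (if k < N then (if k < i then 0 else Pf (k+1) - Pf k) else -Pf N)
         else Pf i)
       else 0) = 0 := by
  have step : ∀ k ∈ range (N+2),
      (if l ≤ k then
        (if k < N + 1 then
          (if k < N then (if k < i then 0 else Pf (k+1) - Pf k) else -Pf N)
         else Pf i)
       else 0)
      = (if i ≤ k ∧ k < N then Pf (k+1) - Pf k else 0)
        + (if k = N then -Pf N else 0) + (if k = N+1 then Pf i else 0) := by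
    intro k hk
    have hkr : k < N + 2 := Finset.mem_range.mp hk
    rcases Nat.lt_or_ge k N with h1 | h1
    · rcases Nat.lt_or_ge k i with h2 | h2
      · have hval : (if l ≤ k then
            (if k < N + 1 then
              (if k < N then (if k < i then 0 else Pf (k+1) - Pf k) else -Pf N)
             else Pf i)
           else 0) = (0:ℝ) := by
          by_cases hl : l ≤ k
          · rw [if_pos hl, if_pos (by omega), if_pos h1, if_pos h2]
          · rw [if_neg hl]
        rw [hval, if_neg (by omega : ¬(i ≤ k ∧ k < N)), if_neg (by omega : ¬(k = N)),
          if_neg (by omega : ¬(k = N+1))]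
        ring
      · rw [if_pos (by omega : l ≤ k), if_pos (by omega), if_pos h1, if_neg (by omega),
          if_pos ⟨h2, h1⟩, if_neg (by omega), if_neg (by omega)]
        ring
    · rcases Nat.lt_or_ge k (N+1) with h2 | h2
      · have hk : k = N := by omega
        subst hk
        rw [if_pos (by omega), if_pos (by omega), if_neg (by omega),
          if_neg (by omega), if_pos rfl, if_neg (by omega)]
        ring
      · have hk2 : k = N + 1 := by omega
        subst hk2
        rw [if_pos (by omega), if_neg (by omega), if_neg (by omega : ¬(i ≤ N+1 ∧ N+1 < N)),
          if_neg (by omega : ¬(N+1 = N)), if_pos rfl]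
        ring
  rw [Finset.sum_congr rfl step, Finset.sum_add_distrib, Finset.sum_add_distrib]
  have eB : ∑ k ∈ range (N+2), (if k = N then -Pf N else 0) = -Pf N := by
    rw [Finset.sum_ite_eq' (range (N+2)) N (fun _ => -Pf N), if_pos (by simp)]
  have eC : ∑ k ∈ range (N+2), (if k = N+1 then Pf i else 0) = Pf i := by
    rw [Finset.sum_ite_eq' (range (N+2)) (N+1) (fun _ => Pf i), if_pos (by simp)]
  have eA : ∑ k ∈ range (N+2), (if i ≤ k ∧ k < N then Pf (k+1) - Pf k else 0)
      = Pf N - Pf i := by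
    rw [sum_if_Ico (fun k => Pf (k+1) - Pf k) i N (N+2) (by omega)]
    exact teleIco Pf i N hiN
  rw [eA, eB, eC]
  ring

lemma teleRow (N : ℕ) (Aab : ℝ) (LC Dn : ℕ → ℝ) (hDn : ∀ j, N+1 ≤ j → Dn j = 0)
    (l c : ℕ) (hl : l ≤ N) (hlc : l ≤ c) (hc : c ≤ N+1) :
    ∑ k ∈ range (N+2), (if l ≤ k then
        ((if c = k ∧ k < N+1 then Aab + LC c else 0)
         + (if c < N+1 ∧ k = N+1 then -(LC c) else 0)
         + (if c = N+1 ∧ k = N+1 then Aab else 0)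
         + (if k < N+1 then ((if k ≤ c then Dn k else 0)
              - (if k+1 ≤ c then Dn (k+1) else 0)) else 0))
      else 0) = Aab + Dn l := by
  have step : ∀ k ∈ range (N+2), (if l ≤ k then
        ((if c = k ∧ k < N+1 then Aab + LC c else 0)
         + (if c < N+1 ∧ k = N+1 then -(LC c) else 0)
         + (if c = N+1 ∧ k = N+1 then Aab else 0)
         + (if k < N+1 then ((if k ≤ c then Dn k else 0)
              - (if k+1 ≤ c then Dn (k+1) else 0)) else 0))
      else 0)
      = (if k = c then (if c < N+1 then Aab + LC c else 0) else 0)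
        + (if k = N+1 then (if c < N+1 then -(LC c) else 0) else 0)
        + (if k = N+1 then (if c = N+1 then Aab else 0) else 0)
        + ((if l ≤ k ∧ k ≤ min c N then Dn k else 0)
           - (if l ≤ k ∧ k + 1 ≤ min c N then Dn (k+1) else 0)) := by
    intro k hk
    have hkr : k < N + 2 := Finset.mem_range.mp hk
    by_cases hlk : l ≤ k
    · rw [if_pos hlk]
      have e1 : (if c = k ∧ k < N+1 then Aab + LC c else 0)
          = (if k = c then (if c < N+1 then Aab + LC c else 0) else 0) := by
        split_ifs <;> first | omega | ring
      have e2 : (if c < N+1 ∧ k = N+1 then -(LC c) else 0)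
          = (if k = N+1 then (if c < N+1 then -(LC c) else 0) else 0) := by
        split_ifs <;> first | omega | ring
      have e3 : (if c = N+1 ∧ k = N+1 then Aab else 0)
          = (if k = N+1 then (if c = N+1 then Aab else 0) else 0) := by
        split_ifs <;> first | omega | ring
      have e4 : (if k < N+1 then ((if k ≤ c then Dn k else 0)
              - (if k+1 ≤ c then Dn (k+1) else 0)) else 0)
          = ((if l ≤ k ∧ k ≤ min c N then Dn k else 0)
             - (if l ≤ k ∧ k + 1 ≤ min c N then Dn (k+1) else 0)) := by
        by_cases h1 : k < N+1
        · rw [if_pos h1]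
          congr 1
          · split_ifs <;> first | omega | ring
          · by_cases h2 : k + 1 ≤ c
            · rw [if_pos h2]
              by_cases h3 : k + 1 ≤ min c N
              · rw [if_pos ⟨hlk, h3⟩]
              · rw [if_neg (by omega), hDn (k+1) (by omega)]
            · rw [if_neg h2, if_neg (by omega)]
        · rw [if_neg h1, if_neg (by omega), if_neg (by omega)]
          ring
      rw [e1, e2, e3, e4]
    · rw [if_neg hlk, if_neg (by omega : ¬(k = c)), if_neg (by omega : ¬(k = N+1)),
        if_neg (by omega : ¬(k = N+1)), if_neg (by omega : ¬(l ≤ k ∧ k ≤ min c N)),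
        if_neg (by omega : ¬(l ≤ k ∧ k + 1 ≤ min c N))]
      ring
  have h1 : ∑ k ∈ range (N+2), (if k = c then (if c < N+1 then Aab + LC c else 0) else 0)
      = (if c < N+1 then Aab + LC c else 0) := by
    rw [Finset.sum_ite_eq' (range (N+2)) c (fun _ => (if c < N+1 then Aab + LC c else 0))]
    exact if_pos (by rw [Finset.mem_range]; omega)
  have h2 : ∑ k ∈ range (N+2), (if k = N+1 then (if c < N+1 then -(LC c) else 0) else 0)
      = (if c < N+1 then -(LC c) else 0) := by
    rw [Finset.sum_ite_eq' (range (N+2)) (N+1) (fun _ => (if c < N+1 then -(LC c) else 0))]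
    exact if_pos (by rw [Finset.mem_range]; omega)
  have h3 : ∑ k ∈ range (N+2), (if k = N+1 then (if c = N+1 then Aab else 0) else 0)
      = (if c = N+1 then Aab else 0) := by
    rw [Finset.sum_ite_eq' (range (N+2)) (N+1) (fun _ => (if c = N+1 then Aab else 0))]
    exact if_pos (by rw [Finset.mem_range]; omega)
  have hS4 : ∑ k ∈ range (N+2),
      ((if l ≤ k ∧ k ≤ min c N then Dn k else 0)
       - (if l ≤ k ∧ k + 1 ≤ min c N then Dn (k+1) else 0)) = Dn l :=
    teleNat Dn l (min c N) (N+2) (by omega) (by omega)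
  rw [Finset.sum_congr rfl step, Finset.sum_add_distrib, Finset.sum_add_distrib,
    Finset.sum_add_distrib, h1, h2, h3, hS4]
  by_cases hcN : c < N+1
  · rw [if_pos hcN, if_pos hcN, if_neg (by omega)]
    ring
  · rw [if_neg hcN, if_neg hcN, if_pos (by omega)]
    ring

end TriAux


open Finset Matrix

namespace TriAux

variable {M : ℕ} {S : Type*} [Fintype S] [DecidableEq S]

lemma sum_fin_single (v : ℕ) (g : Fin M → ℝ) :
    ∑ k : Fin M, (if k.1 = v then g k else 0) = if h : v < M then g ⟨v, h⟩ else 0 := by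
  by_cases h : v < M
  · rw [dif_pos h]
    have e : ∀ k : Fin M, (if k.1 = v then g k else 0) = if k = ⟨v, h⟩ then g k else 0 := by
      intro k
      by_cases hk : k.1 = v
      · rw [if_pos hk, if_pos (Fin.ext hk)]
      · rw [if_neg hk, if_neg (fun hh => hk (by rw [hh]))]
    rw [Finset.sum_congr rfl fun k _ => e k, Finset.sum_ite_eq' univ ⟨v, h⟩ g,
      if_pos (mem_univ _)]
  · rw [dif_neg h]
    apply Finset.sum_eq_zero
    intro k _
    rw [if_neg (by have := k.isLt; omega)]

lemma sum_fin_single' (v : ℕ) (g : Fin M → ℝ) :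
    ∑ k : Fin M, (if k.1 + 1 = v then g k else 0)
      = if h : v - 1 < M ∧ 1 ≤ v then g ⟨v - 1, h.1⟩ else 0 := by
  by_cases h : v - 1 < M ∧ 1 ≤ v
  · rw [dif_pos h]
    have e : ∀ k : Fin M, (if k.1 + 1 = v then g k else 0)
        = if k = ⟨v - 1, h.1⟩ then g k else 0 := by
      intro k
      by_cases hk : k.1 + 1 = v
      · rw [if_pos hk, if_pos (Fin.ext (by simp only []; omega))]
      · rw [if_neg hk, if_neg (fun hh => hk (by rw [hh]; simp only []; omega))]
    rw [Finset.sum_congr rfl fun k _ => e k, Finset.sum_ite_eq' univ _ g, if_pos (mem_univ _)]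
  · rw [dif_neg h]
    apply Finset.sum_eq_zero
    intro k _
    rw [if_neg (by have := k.isLt; omega)]

/-- generic block-ones lower triangular matrix -/
def gZeta (M : ℕ) (S : Type*) [DecidableEq S] : Matrix (Fin M × S) (Fin M × S) ℝ :=
  Matrix.of fun x y => if y.1 ≤ x.1 ∧ x.2 = y.2 then 1 else 0

/-- its explicit inverse -/
def gMu (M : ℕ) (S : Type*) [DecidableEq S] : Matrix (Fin M × S) (Fin M × S) ℝ :=
  Matrix.of fun x y =>
    if x.1 = y.1 ∧ x.2 = y.2 then 1 else if y.1.1 + 1 = x.1.1 ∧ x.2 = y.2 then -1 else 0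

lemma gZeta_mul_gMu : gZeta M S * gMu M S = 1 := by
  ext x y
  rw [mul_apply, Fintype.sum_prod_type, one_apply]
  by_cases hst : x.2 = y.2
  · have collapse : ∀ k : Fin M, ∑ a : S, gZeta M S x (k, a) * gMu M S (k, a) y
        = (if k.1 = y.1.1 then (if y.1.1 ≤ x.1.1 then 1 else 0) else 0)
          - (if k.1 = y.1.1 + 1 then (if k.1 ≤ x.1.1 then 1 else 0) else 0) := by
      intro k
      have step : ∀ a : S, gZeta M S x (k, a) * gMu M S (k, a) y
          = if a = y.2 then
              ((if k.1 = y.1.1 then (if y.1.1 ≤ x.1.1 then (1:ℝ) else 0) else 0)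
               - (if k.1 = y.1.1 + 1 then (if k.1 ≤ x.1.1 then 1 else 0) else 0)) else 0 := by
        intro a
        simp only [gZeta, gMu, Matrix.of_apply, hst, Fin.ext_iff, Fin.le_def]
        by_cases ha : a = y.2
        · subst ha
          simp only [eq_self_iff_true, and_true, if_pos rfl]
          split_ifs <;> first | omega | norm_num
        · rw [if_neg (fun hh => ha hh.2.symm), zero_mul, if_neg ha]
      rw [Finset.sum_congr rfl fun a _ => step a, Finset.sum_ite_eq' univ y.2 _,
        if_pos (mem_univ _)]
    rw [Finset.sum_congr rfl fun k _ => collapse k, Finset.sum_sub_distrib,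
      sum_fin_single, sum_fin_single]
    have hx := x.1.isLt
    have hy := y.1.isLt
    have hxy : (x = y) = (x.1.1 = y.1.1) := by
      apply propext
      constructor
      · intro h; rw [h]
      · intro h; exact Prod.ext (Fin.ext h) hst
    simp only [hxy]
    split_ifs <;> first | omega | norm_num
  · have hz : ∀ k : Fin M, ∀ a : S, gZeta M S x (k, a) * gMu M S (k, a) y = 0 := by
      intro k a
      simp only [gZeta, gMu, Matrix.of_apply]
      by_cases h1 : (k ≤ x.1 ∧ x.2 = a)
      · rw [if_pos h1, one_mul, if_neg (fun hh => hst (h1.2.trans hh.2)),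
          if_neg (fun hh => hst (h1.2.trans hh.2))]
      · rw [if_neg h1, zero_mul]
    calc (∑ k : Fin M, ∑ a : S, gZeta M S x (k, a) * gMu M S (k, a) y)
        = 0 := by
          apply Finset.sum_eq_zero; intro k _
          apply Finset.sum_eq_zero; intro a _
          exact hz k a
      _ = if x = y then 1 else 0 := by
          rw [if_neg (fun hh => hst (by rw [hh]))]

lemma gMu_mul_gZeta : gMu M S * gZeta M S = 1 := by
  ext x y
  rw [mul_apply, Fintype.sum_prod_type, one_apply]
  by_cases hst : x.2 = y.2
  · have collapse : ∀ k : Fin M, ∑ a : S, gMu M S x (k, a) * gZeta M S (k, a) y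
        = (if k.1 = x.1.1 then (if y.1.1 ≤ x.1.1 then 1 else 0) else 0)
          - (if k.1 + 1 = x.1.1 then (if y.1.1 ≤ k.1 then 1 else 0) else 0) := by
      intro k
      have step : ∀ a : S, gMu M S x (k, a) * gZeta M S (k, a) y
          = if a = y.2 then
              ((if k.1 = x.1.1 then (if y.1.1 ≤ x.1.1 then (1:ℝ) else 0) else 0)
               - (if k.1 + 1 = x.1.1 then (if y.1.1 ≤ k.1 then 1 else 0) else 0)) else 0 := by
        intro a
        simp only [gZeta, gMu, Matrix.of_apply, hst, Fin.ext_iff, Fin.le_def]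
        by_cases ha : a = y.2
        · subst ha
          simp only [eq_self_iff_true, and_true, if_pos rfl]
          split_ifs <;> first | omega | norm_num
        · rw [if_neg (fun hh => ha hh.2.symm), if_neg (fun hh => ha hh.2.symm), zero_mul,
            if_neg ha]
      rw [Finset.sum_congr rfl fun a _ => step a, Finset.sum_ite_eq' univ y.2 _,
        if_pos (mem_univ _)]
    rw [Finset.sum_congr rfl fun k _ => collapse k, Finset.sum_sub_distrib,
      sum_fin_single, sum_fin_single']
    have hx := x.1.isLt
    have hy := y.1.isLt
    have hxy : (x = y) = (x.1.1 = y.1.1) := by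
      apply propext
      constructor
      · intro h; rw [h]
      · intro h; exact Prod.ext (Fin.ext h) hst
    simp only [hxy]
    split_ifs <;> first | omega | norm_num
  · have hz : ∀ k : Fin M, ∀ a : S, gMu M S x (k, a) * gZeta M S (k, a) y = 0 := by
      intro k a
      simp only [gZeta, gMu, Matrix.of_apply]
      by_cases h1 : (y.1 ≤ k ∧ a = y.2)
      · rw [if_pos h1, mul_one, if_neg (fun hh => hst (hh.2.trans h1.2)),
          if_neg (fun hh => hst (hh.2.trans h1.2))]
      · rw [if_neg h1, mul_zero]
    calc (∑ k : Fin M, ∑ a : S, gMu M S x (k, a) * gZeta M S (k, a) y)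
        = 0 := by
          apply Finset.sum_eq_zero; intro k _
          apply Finset.sum_eq_zero; intro a _
          exact hz k a
      _ = if x = y then 1 else 0 := by
          rw [if_neg (fun hh => hst (by rw [hh]))]

end TriAux


namespace TriLQG

open Finset Matrix

section Bridge

variable {N : ℕ}

lemma blkOf_emb (nd : Fin (N+1) → ℕ) (k : Fin (N+2)) (a : Idx nd) :
    blkOf (emb k a : BigIx nd) = k := by
  unfold emb blkOf
  by_cases h : k.1 < N + 1
  · rw [dif_pos h]
    simp only [Sum.elim_inl]
    exact Fin.ext rfl
  · rw [dif_neg h]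
    simp only [Sum.elim_inr]
    exact Fin.ext (by have := k.isLt; simp only [Fin.val_last]; omega)

lemma stOf_emb (nd : Fin (N+1) → ℕ) (k : Fin (N+2)) (a : Idx nd) :
    stOf (emb k a : BigIx nd) = a := by
  unfold emb stOf
  by_cases h : k.1 < N + 1
  · rw [dif_pos h]
    rfl
  · rw [dif_neg h]
    rfl

lemma emb_blkOf_stOf (nd : Fin (N+1) → ℕ) (x : BigIx nd) :
    emb (blkOf x) (stOf x) = x := by
  cases x with
  | inl y =>
      unfold emb blkOf stOf
      simp only [Sum.elim_inl]
      simp only [Fin.coe_castSucc, Fin.is_lt, ↓reduceDIte]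
  | inr a =>
      unfold emb blkOf stOf
      simp only [Sum.elim_inr]
      simp only [Fin.val_last, lt_self_iff_false, ↓reduceDIte, id]

/-- the bijection between `Fin (N+2) × Idx nd` and `BigIx nd` -/
def eqEmb (nd : Fin (N+1) → ℕ) : Fin (N+2) × Idx nd ≃ BigIx nd where
  toFun p := emb p.1 p.2
  invFun x := (blkOf x, stOf x)
  left_inv p := by
    ext : 1
    · exact blkOf_emb nd p.1 p.2
    · exact stOf_emb nd p.1 p.2
  right_inv x := emb_blkOf_stOf nd x

@[simp] lemma eqEmb_symm_apply (nd : Fin (N+1) → ℕ) (x : BigIx nd) :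
    (eqEmb nd).symm x = (blkOf x, stOf x) := rfl

@[simp] lemma eqEmb_apply (nd : Fin (N+1) → ℕ) (p : Fin (N+2) × Idx nd) :
    eqEmb nd p = emb p.1 p.2 := rfl

lemma sum_bigIx {nd : Fin (N+1) → ℕ} (f : BigIx nd → ℝ) :
    ∑ x : BigIx nd, f x = ∑ k : Fin (N+2), ∑ a : Idx nd, f (emb k a) := by
  rw [← Equiv.sum_comp (eqEmb nd) f, Fintype.sum_prod_type]
  rfl

lemma zetaBar_eq (nd : Fin (N+1) → ℕ) :
    zetaBar nd = (TriAux.gZeta (N+2) (Idx nd)).submatrix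
      ((eqEmb nd).symm) ((eqEmb nd).symm) := by
  ext x y
  rfl

/-- explicit inverse of `ζ̄` -/
def muBar (nd : Fin (N+1) → ℕ) : Matrix (BigIx nd) (BigIx nd) ℝ :=
  (TriAux.gMu (N+2) (Idx nd)).submatrix ((eqEmb nd).symm) ((eqEmb nd).symm)

lemma zetaBar_mul_muBar (nd : Fin (N+1) → ℕ) : zetaBar nd * muBar nd = 1 := by
  rw [zetaBar_eq, muBar]
  rw [show ((eqEmb nd).symm : BigIx nd → Fin (N+2) × Idx nd)
      = ((eqEmb nd).symm : BigIx nd ≃ Fin (N+2) × Idx nd) from rfl]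
  rw [Matrix.submatrix_mul_equiv, TriAux.gZeta_mul_gMu, Matrix.submatrix_one_equiv]

lemma muBar_mul_zetaBar (nd : Fin (N+1) → ℕ) : muBar nd * zetaBar nd = 1 := by
  rw [zetaBar_eq, muBar]
  rw [show ((eqEmb nd).symm : BigIx nd → Fin (N+2) × Idx nd)
      = ((eqEmb nd).symm : BigIx nd ≃ Fin (N+2) × Idx nd) from rfl]
  rw [Matrix.submatrix_mul_equiv, TriAux.gMu_mul_gZeta, Matrix.submatrix_one_equiv]

lemma zetaN_eq (nd : Fin (N+1) → ℕ) : zetaN nd = TriAux.gZeta (N+1) (Idx nd) := rfl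

lemma zetaN_mul_muN (nd : Fin (N+1) → ℕ) :
    zetaN nd * TriAux.gMu (N+1) (Idx nd) = 1 := by
  rw [zetaN_eq]; exact TriAux.gZeta_mul_gMu

lemma inv_zetaN (nd : Fin (N+1) → ℕ) : (zetaN nd)⁻¹ = TriAux.gMu (N+1) (Idx nd) :=
  Matrix.inv_eq_right_inv (zetaN_mul_muN nd)

end Bridge

end TriLQG



namespace TriLQG

open Finset Matrix

section Core

variable {N : ℕ}

/-- collapse of a sum against a column of `gMu` -/
lemma sum_mul_gMu (nd : Fin (N+1) → ℕ) (φ : CtrIx nd → ℝ) (k' : Fin (N+1)) (b : Idx nd) :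
    ∑ z : CtrIx nd, φ z * TriAux.gMu (N+1) (Idx nd) z (k', b)
    = φ (k', b) - (if h : k'.1 + 1 < N+1 then φ (⟨k'.1+1, h⟩, b) else 0) := by
  rw [Fintype.sum_prod_type]
  have step : ∀ (j : Fin (N+1)) (e : Idx nd),
      φ (j, e) * TriAux.gMu (N+1) (Idx nd) (j, e) (k', b)
      = if e = b then ((if j.1 = k'.1 then φ (j, b) else 0)
          - (if j.1 = k'.1 + 1 then φ (j, b) else 0)) else 0 := by
    intro j e
    simp only [TriAux.gMu, Matrix.of_apply]
    by_cases he : e = b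
    · subst he
      have h1 := j.isLt
      have h2 := k'.isLt
      simp only [Fin.ext_iff, eq_self_iff_true, and_true, if_true]
      split_ifs <;> first | omega | ring
    · rw [if_neg (fun hh => he hh.2), if_neg (fun hh => he hh.2), mul_zero, if_neg he]
  have inner : ∀ j : Fin (N+1), ∑ e : Idx nd,
      φ (j, e) * TriAux.gMu (N+1) (Idx nd) (j, e) (k', b)
      = (if j.1 = k'.1 then φ (j, b) else 0) - (if j.1 = k'.1 + 1 then φ (j, b) else 0) := by
    intro j
    rw [Finset.sum_congr rfl fun e _ => step j e, Finset.sum_ite_eq' univ b _,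
      if_pos (mem_univ _)]
  rw [Finset.sum_congr rfl fun j _ => inner j, Finset.sum_sub_distrib,
    TriAux.sum_fin_single k'.1 (fun j => φ (j, b)),
    TriAux.sum_fin_single (k'.1+1) (fun j => φ (j, b)), dif_pos k'.isLt]

lemma zetaN_mul_blkDiag_apply (nd : Fin (N+1) → ℕ) (f : Fin (N+1) → Matrix (Idx nd) (Idx nd) ℝ)
    (c : Fin (N+1)) (a : Idx nd) (z : CtrIx nd) :
    (zetaN nd * blkDiagN f) (c, a) z = if z.1 ≤ c then f z.1 a z.2 else 0 := by
  rw [mul_apply, Fintype.sum_prod_type]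
  have step : ∀ (u : Fin (N+1)) (w : Idx nd), zetaN nd (c,a) (u,w) * blkDiagN f (u,w) z
      = if w = a then (if u.1 = z.1.1 then (if u ≤ c then f u a z.2 else 0) else 0) else 0 := by
    intro u w
    simp only [zetaN, blkDiagN, Matrix.of_apply]
    by_cases hw : w = a
    · subst hw
      simp only [eq_self_iff_true, and_true, Fin.ext_iff, Fin.le_def]
      split_ifs <;> first | omega | ring
    · rw [if_neg (fun hh => hw hh.2.symm), zero_mul, if_neg hw]
  have inner : ∀ u : Fin (N+1), ∑ w : Idx nd, zetaN nd (c,a) (u,w) * blkDiagN f (u,w) z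
      = (if u.1 = z.1.1 then (if u ≤ c then f u a z.2 else 0) else 0) := by
    intro u
    rw [Finset.sum_congr rfl fun w _ => step u w, Finset.sum_ite_eq' univ a _,
      if_pos (mem_univ _)]
  rw [Finset.sum_congr rfl fun u _ => inner u,
    TriAux.sum_fin_single z.1.1 (fun u => if u ≤ c then f u a z.2 else 0), dif_pos z.1.isLt]

lemma zDmu_apply (nd : Fin (N+1) → ℕ) (f : Fin (N+1) → Matrix (Idx nd) (Idx nd) ℝ)
    (c k' : Fin (N+1)) (a b : Idx nd) :
    (zetaN nd * blkDiagN f * (zetaN nd)⁻¹) ((c,a)) ((k',b))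
    = (if k' ≤ c then f k' a b else 0)
      - (if h : k'.1 + 1 < N+1 then
          (if (⟨k'.1+1, h⟩ : Fin (N+1)) ≤ c then f ⟨k'.1+1, h⟩ a b else 0) else 0) := by
  rw [inv_zetaN, mul_apply,
    Finset.sum_congr rfl fun z _ => by rw [zetaN_mul_blkDiag_apply nd f c a z]]
  exact sum_mul_gMu nd (fun z => if z.1 ≤ c then f z.1 a z.2 else 0) k' b

variable (P : Plant N) (K : KGains P) (L : LGains P)

def DnN (a b : Idx P.nd) (j : ℕ) : ℝ :=
  if h : j < N+1 then (Bdown P ⟨j,h⟩ * K ⟨j,h⟩) a b else 0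

def LCN (a b : Idx P.nd) (j : ℕ) : ℝ :=
  if h : j < N+1 then (L ⟨j,h⟩ * Cup P ⟨j,h⟩) a b else 0

def KPf (i : Fin (N+1)) (r : IdxGe P.md i) (b : Idx P.nd) (j : ℕ) : ℝ :=
  if h : j < N+1 then (padGe P.md ⟨j,h⟩ * K ⟨j,h⟩) (r : Idx P.md) b else 0

lemma B_mul_padGe (j : Fin (N+1)) : P.B * padGe P.md j = Bdown P j := by
  ext a c
  rw [mul_apply]
  have e : ∀ jj : Idx P.md, P.B a jj * padGe P.md j jj c
      = if jj = (c : IdxGe P.md j).1 then P.B a jj else 0 := by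
    intro jj
    by_cases h : jj = (c : IdxGe P.md j).1
    · rw [if_pos h]; simp [padGe, h]
    · rw [if_neg h]; simp [padGe, h]
  rw [Finset.sum_congr rfl fun jj _ => e jj, Finset.sum_ite_eq' univ _ _, if_pos (mem_univ _)]
  rfl

lemma padLeT_mul_C (j : Fin (N+1)) : (padLe P.pd j)ᵀ * P.C = Cup P j := by
  ext r b
  rw [mul_apply]
  have e : ∀ cc : Idx P.pd, (padLe P.pd j)ᵀ r cc * P.C cc b
      = if cc = (r : IdxLe P.pd j).1 then P.C cc b else 0 := by
    intro cc
    by_cases h : cc = (r : IdxLe P.pd j).1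
    · rw [if_pos h]; simp [padLe, transpose_apply, h]
    · rw [if_neg h]; simp [padLe, transpose_apply, h]
  rw [Finset.sum_congr rfl fun cc _ => e cc, Finset.sum_ite_eq' univ _ _, if_pos (mem_univ _)]
  rfl

lemma padGeT_mul (i : Fin (N+1)) {X : Type*} [Fintype X] (M : Matrix (Idx P.md) X ℝ)
    (r : IdxGe P.md i) (x : X) :
    ((padGe P.md i)ᵀ * M) r x = M (r : IdxGe P.md i).1 x := by
  rw [mul_apply]
  have e : ∀ rr : Idx P.md, (padGe P.md i)ᵀ r rr * M rr x
      = if rr = (r : IdxGe P.md i).1 then M rr x else 0 := by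
    intro rr
    by_cases h : rr = (r : IdxGe P.md i).1
    · rw [if_pos h]; simp [padGe, transpose_apply, h]
    · rw [if_neg h]; simp [padGe, transpose_apply, h]
  rw [Finset.sum_congr rfl fun rr _ => e rr, Finset.sum_ite_eq' univ _ _, if_pos (mem_univ _)]

lemma AK_apply (c' k' : Fin (N+1)) (a b : Idx P.nd) :
    AK P K L ((c', a)) ((k', b))
    = (if c' = k' then P.A a b + (L c' * Cup P c') a b else 0)
      + ((if k' ≤ c' then (Bdown P k' * K k') a b else 0)
         - (if h : k'.1 + 1 < N+1 then
             (if (⟨k'.1+1, h⟩ : Fin (N+1)) ≤ c' then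
               (Bdown P ⟨k'.1+1, h⟩ * K ⟨k'.1+1, h⟩) a b else 0) else 0)) := by
  have h0 : AK P K L ((c',a)) ((k',b))
      = blkDiagN (fun _ => P.A) ((c',a)) ((k',b))
        + blkDiagN (fun k => L k * Cup P k) ((c',a)) ((k',b))
        + (zetaN P.nd * blkDiagN (fun k => Bdown P k * K k) * (zetaN P.nd)⁻¹)
            ((c',a)) ((k',b)) := rfl
  rw [h0, zDmu_apply]
  simp only [blkDiagN, Matrix.of_apply]
  split_ifs <;> ring

lemma BKC_apply (c' : Fin (N+1)) (a b : Idx P.nd) :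
    (BK P L * P.C) ((c', a)) b = -((L c' * Cup P c') a b) := by
  rw [mul_apply]
  have e : ∀ cc : Idx P.pd, BK P L ((c',a)) cc * P.C cc b
      = -((L c' * (padLe P.pd c')ᵀ) a cc * P.C cc b) := by
    intro cc
    simp only [BK, Matrix.of_apply]
    ring
  rw [Finset.sum_congr rfl fun cc _ => e cc, Finset.sum_neg_distrib]
  congr 1
  rw [← mul_apply, Matrix.mul_assoc, padLeT_mul_C]

lemma BCK_apply (k' : Fin (N+1)) (a b : Idx P.nd) :
    (P.B * CK P K) a ((k', b))
    = (Bdown P k' * K k') a b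
      - (if h : k'.1 + 1 < N+1 then (Bdown P ⟨k'.1+1, h⟩ * K ⟨k'.1+1, h⟩) a b else 0) := by
  have h0 : P.B * CK P K
      = (P.B * Matrix.of fun rr (x : CtrIx P.nd) => (padGe P.md x.1 * K x.1) rr x.2)
        * (zetaN P.nd)⁻¹ := by
    rw [CK, ← Matrix.mul_assoc]
  rw [h0, inv_zetaN, mul_apply]
  have h1 : ∀ z : CtrIx P.nd,
      (P.B * Matrix.of fun rr (x : CtrIx P.nd) => (padGe P.md x.1 * K x.1) rr x.2) a z
      = (Bdown P z.1 * K z.1) a z.2 := by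
    intro z
    have h2 : (P.B * Matrix.of fun rr (x : CtrIx P.nd) => (padGe P.md x.1 * K x.1) rr x.2) a z
        = (P.B * (padGe P.md z.1 * K z.1)) a z.2 := by
      rw [mul_apply, mul_apply]
      rfl
    rw [h2, ← Matrix.mul_assoc, B_mul_padGe]
  rw [Finset.sum_congr rfl fun z _ => by rw [h1 z]]
  exact sum_mul_gMu P.nd (fun z => (Bdown P z.1 * K z.1) a z.2) k' b

lemma Acal_emb_apply (c k : Fin (N+2)) (a b : Idx P.nd) :
    Acal P K L (emb c a) (emb k b)
    = (if c.1 = k.1 ∧ k.1 < N+1 then P.A a b + LCN P L a b c.1 else 0)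
      + (if c.1 < N+1 ∧ k.1 = N+1 then -(LCN P L a b c.1) else 0)
      + (if c.1 = N+1 ∧ k.1 = N+1 then P.A a b else 0)
      + (if k.1 < N+1 then ((if k.1 ≤ c.1 then DnN P K a b k.1 else 0)
            - (if k.1 + 1 ≤ c.1 then DnN P K a b (k.1+1) else 0)) else 0) := by
  have hcb := c.isLt
  have hkb := k.isLt
  unfold emb
  by_cases hc : c.1 < N + 1 <;> by_cases hk : k.1 < N + 1
  · -- controller-controller
    rw [dif_pos hc, dif_pos hk]
    show AK P K L ((⟨c.1,hc⟩ : Fin (N+1)), a) ((⟨k.1,hk⟩ : Fin (N+1)), b) = _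
    rw [AK_apply]
    rw [if_neg (by omega : ¬(c.1 < N+1 ∧ k.1 = N+1)),
      if_neg (by omega : ¬(c.1 = N+1 ∧ k.1 = N+1)), if_pos hk]
    simp only [LCN, DnN, Fin.ext_iff, Fin.le_def, dif_pos hc, dif_pos hk]
    have e2 : (if h : k.1 + 1 < N+1 then
          (if k.1 + 1 ≤ c.1 then (Bdown P ⟨k.1+1, h⟩ * K ⟨k.1+1, h⟩) a b else 0) else 0)
        = (if k.1 + 1 ≤ c.1 then (if h : k.1+1 < N+1 then
            (Bdown P ⟨k.1+1, h⟩ * K ⟨k.1+1, h⟩) a b else 0) else 0) := by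
      by_cases h2 : k.1 + 1 < N + 1
      · simp only [dif_pos h2]
      · simp only [dif_neg h2, ite_self]
    rw [e2]
    have e3 : (if c.1 = k.1 ∧ k.1 < N+1 then
          P.A a b + (L ⟨c.1, hc⟩ * Cup P ⟨c.1, hc⟩) a b else 0)
        = (if c.1 = k.1 then P.A a b + (L ⟨c.1, hc⟩ * Cup P ⟨c.1, hc⟩) a b else 0) := by
      split_ifs <;> first | omega | ring
    rw [e3]
    ring
  · -- controller-plant
    have hk1 : k.1 = N+1 := by omega
    rw [dif_pos hc, dif_neg hk]
    show (BK P L * P.C) ((⟨c.1,hc⟩ : Fin (N+1)), a) b = _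
    rw [BKC_apply]
    rw [if_neg (by omega : ¬(c.1 = k.1 ∧ k.1 < N+1)), if_pos ⟨hc, hk1⟩,
      if_neg (by omega : ¬(c.1 = N+1 ∧ k.1 = N+1)), if_neg (by omega : ¬(k.1 < N+1))]
    simp only [LCN, dif_pos hc]
    ring
  · -- plant-controller
    have hc1 : c.1 = N+1 := by omega
    rw [dif_neg hc, dif_pos hk]
    show (P.B * CK P K) a ((⟨k.1,hk⟩ : Fin (N+1)), b) = _
    rw [BCK_apply]
    rw [if_neg (by omega : ¬(c.1 = k.1 ∧ k.1 < N+1)),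
      if_neg (by omega : ¬(c.1 < N+1 ∧ k.1 = N+1)),
      if_neg (by omega : ¬(c.1 = N+1 ∧ k.1 = N+1)), if_pos hk,
      if_pos (by omega : k.1 ≤ c.1), if_pos (by omega : k.1 + 1 ≤ c.1)]
    simp only [DnN, dif_pos hk]
    ring
  · -- plant-plant
    have hc1 : c.1 = N+1 := by omega
    have hk1 : k.1 = N+1 := by omega
    rw [dif_neg hc, dif_neg hk]
    show P.A a b = _
    rw [if_neg (by omega : ¬(c.1 = k.1 ∧ k.1 < N+1)),
      if_neg (by omega : ¬(c.1 < N+1 ∧ k.1 = N+1)), if_pos ⟨hc1, hk1⟩,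
      if_neg (by omega : ¬(k.1 < N+1))]
    ring

end Core

end TriLQG


namespace TriLQG

open Finset Matrix

section Core2

variable {N : ℕ}

lemma sum_muBar_mul (nd : Fin (N+1) → ℕ) (φ : BigIx nd → ℝ) (x : BigIx nd) :
    ∑ z : BigIx nd, muBar nd x z * φ z
    = φ x - (if h : (blkOf x).1 - 1 < N + 2 ∧ 1 ≤ (blkOf x).1
        then φ (emb ⟨(blkOf x).1 - 1, h.1⟩ (stOf x)) else 0) := by
  rw [sum_bigIx (fun z => muBar nd x z * φ z)]
  have step : ∀ (k : Fin (N+2)) (a : Idx nd),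
      muBar nd x (emb k a) * φ (emb k a)
      = if a = stOf x then
          ((if k.1 = (blkOf x).1 then φ (emb k a) else 0)
           - (if k.1 + 1 = (blkOf x).1 then φ (emb k a) else 0)) else 0 := by
    intro k a
    have hmu : muBar nd x (emb k a)
        = TriAux.gMu (N+2) (Idx nd) ((blkOf x), (stOf x)) ((k, a)) := by
      simp only [muBar, Matrix.submatrix_apply, eqEmb_symm_apply, blkOf_emb, stOf_emb]
    rw [hmu]
    simp only [TriAux.gMu, Matrix.of_apply]
    by_cases ha : a = stOf x
    · rw [if_pos ha]
      have h1 := k.isLt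
      have h2 := (blkOf x).isLt
      simp only [Fin.ext_iff, ha, eq_self_iff_true, and_true]
      split_ifs <;> first | omega | ring
    · rw [if_neg (fun hh => ha hh.2.symm), if_neg (fun hh => ha hh.2.symm), zero_mul,
        if_neg ha]
  have inner : ∀ k : Fin (N+2), ∑ a : Idx nd, muBar nd x (emb k a) * φ (emb k a)
      = (if k.1 = (blkOf x).1 then φ (emb k (stOf x)) else 0)
        - (if k.1 + 1 = (blkOf x).1 then φ (emb k (stOf x)) else 0) := by
    intro k
    rw [Finset.sum_congr rfl fun a _ => step k a, Finset.sum_ite_eq' univ (stOf x) _,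
      if_pos (mem_univ _)]
  rw [Finset.sum_congr rfl fun k _ => inner k, Finset.sum_sub_distrib,
    TriAux.sum_fin_single (blkOf x).1 (fun k => φ (emb k (stOf x))),
    TriAux.sum_fin_single' (blkOf x).1 (fun k => φ (emb k (stOf x))),
    dif_pos (blkOf x).isLt, Fin.eta, emb_blkOf_stOf]

lemma sum_mul_zetaBar (nd : Fin (N+1) → ℕ) (φ : BigIx nd → ℝ) (x : BigIx nd) :
    ∑ z : BigIx nd, φ z * zetaBar nd z x
    = ∑ k : Fin (N+2), (if (blkOf x).1 ≤ k.1 then φ (emb k (stOf x)) else 0) := by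
  rw [sum_bigIx (fun z => φ z * zetaBar nd z x)]
  apply Finset.sum_congr rfl
  intro k _
  have step : ∀ a : Idx nd, φ (emb k a) * zetaBar nd (emb k a) x
      = if a = stOf x then (if (blkOf x).1 ≤ k.1 then φ (emb k a) else 0) else 0 := by
    intro a
    simp only [zetaBar, Matrix.of_apply, blkOf_emb, stOf_emb]
    by_cases ha : a = stOf x
    · rw [if_pos ha]
      simp only [ha, eq_self_iff_true, and_true, Fin.le_def]
      split_ifs <;> first | omega | ring
    · rw [if_neg (fun hh => ha hh.2), mul_zero, if_neg ha]
  rw [Finset.sum_congr rfl fun a _ => step a, Finset.sum_ite_eq' univ (stOf x) _,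
    if_pos (mem_univ _)]

variable (P : Plant N) (K : KGains P) (L : LGains P)

lemma rowSum (c l : Fin (N+2)) (a b : Idx P.nd) (hl : l.1 ≤ N) (hlc : l.1 ≤ c.1) :
    ∑ k : Fin (N+2), (if l.1 ≤ k.1 then Acal P K L (emb c a) (emb k b) else 0)
      = P.A a b + DnN P K a b l.1 := by
  have hF : ∀ k : Fin (N+2), (if l.1 ≤ k.1 then Acal P K L (emb c a) (emb k b) else 0)
      = (fun kk : ℕ => if l.1 ≤ kk then
          ((if c.1 = kk ∧ kk < N+1 then P.A a b + LCN P L a b c.1 else 0)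
           + (if c.1 < N+1 ∧ kk = N+1 then -(LCN P L a b c.1) else 0)
           + (if c.1 = N+1 ∧ kk = N+1 then P.A a b else 0)
           + (if kk < N+1 then ((if kk ≤ c.1 then DnN P K a b kk else 0)
                - (if kk + 1 ≤ c.1 then DnN P K a b (kk+1) else 0)) else 0))
         else 0) k.1 := by
    intro k
    simp only []
    rw [Acal_emb_apply]
  rw [Finset.sum_congr rfl fun k _ => hF k,
    Fin.sum_univ_eq_sum_range (fun kk : ℕ => if l.1 ≤ kk then
          ((if c.1 = kk ∧ kk < N+1 then P.A a b + LCN P L a b c.1 else 0)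
           + (if c.1 < N+1 ∧ kk = N+1 then -(LCN P L a b c.1) else 0)
           + (if c.1 = N+1 ∧ kk = N+1 then P.A a b else 0)
           + (if kk < N+1 then ((if kk ≤ c.1 then DnN P K a b kk else 0)
                - (if kk + 1 ≤ c.1 then DnN P K a b (kk+1) else 0)) else 0))
         else 0) (N+2)]
  exact TriAux.teleRow N (P.A a b) (LCN P L a b) (DnN P K a b)
    (fun j hj => by simp only [DnN]; rw [dif_neg (by omega)]) l.1 c.1 hl hlc
    (by have := c.isLt; omega)

lemma Kcal_emb_apply (i : Fin (N+1)) (r : IdxGe P.md i) (k : Fin (N+2)) (b : Idx P.nd) :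
    Kcal P K i r (emb k b)
    = if k.1 < N+1 then (if k.1 < N then (if k.1 < i.1 then 0
          else KPf P K i r b (k.1+1) - KPf P K i r b k.1)
        else -(KPf P K i r b N))
      else KPf P K i r b i.1 := by
  simp only [Kcal]
  rw [padGeT_mul]
  simp only [Matrix.of_apply]
  unfold emb
  by_cases hk : k.1 < N+1
  · rw [dif_pos hk, if_pos hk]
    simp only [Sum.elim_inl]
    by_cases h2 : k.1 < N
    · rw [dif_pos h2, if_pos h2]
      by_cases h3 : k.1 < i.1
      · rw [if_pos (show (⟨k.1, hk⟩ : Fin (N+1)) < i from h3), if_pos h3]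
      · rw [if_neg (show ¬((⟨k.1, hk⟩ : Fin (N+1)) < i) from h3), if_neg h3, Matrix.sub_apply]
        simp only [KPf]
        rw [dif_pos (by omega : k.1 + 1 < N+1), dif_pos hk]
    · rw [dif_neg h2, if_neg h2, Matrix.neg_apply]
      simp only [KPf]
      rw [dif_pos (by omega : N < N+1)]
      try rfl
  · rw [dif_neg hk, if_neg hk]
    simp only [Sum.elim_inr, KPf]
    rw [dif_pos i.isLt]
    try rfl

lemma Lcal_emb_ge (i : Fin (N+1)) (kk : Fin (N+2)) (a : Idx P.nd) (c : IdxLe P.pd i)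
    (hk : i.1 ≤ kk.1) :
    Lcal P L i (emb kk a) c = L i a c := by
  simp only [Lcal, Matrix.of_apply]
  unfold emb
  by_cases h : kk.1 < N+1
  · rw [dif_pos h]
    simp only [Sum.elim_inl]
    rw [if_neg (fun hh => by have h5 : kk.1 < i.1 := hh; omega)]
  · rw [dif_neg h]
    rfl

lemma muAzeta_tri (x y : BigIx P.nd) (hxy : (blkOf y).1 < (blkOf x).1) :
    (muBar P.nd * (Acal P K L * zetaBar P.nd)) x y = 0 := by
  have hbx := (blkOf x).isLt
  have hby := (blkOf y).isLt
  have hφ : ∀ cc : Fin (N+2), (blkOf y).1 ≤ cc.1 →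
      (Acal P K L * zetaBar P.nd) (emb cc (stOf x)) y
      = P.A (stOf x) (stOf y) + DnN P K (stOf x) (stOf y) (blkOf y).1 := by
    intro cc hcc
    rw [mul_apply, sum_mul_zetaBar P.nd (fun z => Acal P K L (emb cc (stOf x)) z) y]
    exact rowSum P K L cc (blkOf y) (stOf x) (stOf y) (by omega) hcc
  rw [mul_apply, sum_muBar_mul P.nd (fun z => (Acal P K L * zetaBar P.nd) z y) x,
    dif_pos (⟨by omega, by omega⟩ : (blkOf x).1 - 1 < N + 2 ∧ 1 ≤ (blkOf x).1)]
  have h1 : (Acal P K L * zetaBar P.nd) x y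
      = P.A (stOf x) (stOf y) + DnN P K (stOf x) (stOf y) (blkOf y).1 := by
    conv_lhs => rw [← emb_blkOf_stOf P.nd x]
    exact hφ (blkOf x) (by omega)
  rw [h1, hφ ⟨(blkOf x).1 - 1, by omega⟩ (by simp only []; omega), sub_self]

lemma Ksupp (i : Fin (N+1)) (r : IdxGe P.md i) (x : BigIx P.nd)
    (hx : (blkOf x).1 ≤ i.1) :
    (Kcal P K i * zetaBar P.nd) r x = 0 := by
  rw [mul_apply, sum_mul_zetaBar P.nd (fun z => Kcal P K i r z) x]
  have hF : ∀ k : Fin (N+2),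
      (if (blkOf x).1 ≤ k.1 then Kcal P K i r (emb k (stOf x)) else 0)
      = (fun kk : ℕ => if (blkOf x).1 ≤ kk then
          (if kk < N+1 then (if kk < N then (if kk < i.1 then 0
              else KPf P K i r (stOf x) (kk+1) - KPf P K i r (stOf x) kk)
            else -(KPf P K i r (stOf x) N))
          else KPf P K i r (stOf x) i.1) else 0) k.1 := by
    intro k
    simp only []
    rw [Kcal_emb_apply]
  rw [Finset.sum_congr rfl fun k _ => hF k,
    Fin.sum_univ_eq_sum_range (fun kk : ℕ => if (blkOf x).1 ≤ kk then
          (if kk < N+1 then (if kk < N then (if kk < i.1 then 0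
              else KPf P K i r (stOf x) (kk+1) - KPf P K i r (stOf x) kk)
            else -(KPf P K i r (stOf x) N))
          else KPf P K i r (stOf x) i.1) else 0) (N+2)]
  exact TriAux.teleK (KPf P K i r (stOf x)) i.1 N (blkOf x).1 hx (by have := i.isLt; omega)

lemma Lsupp (i : Fin (N+1)) (x : BigIx P.nd) (c : IdxLe P.pd i)
    (hx : i.1 < (blkOf x).1) :
    (muBar P.nd * Lcal P L i) x c = 0 := by
  have hb := (blkOf x).isLt
  rw [mul_apply, sum_muBar_mul P.nd (fun z => Lcal P L i z c) x,
    dif_pos (⟨by omega, by omega⟩ : (blkOf x).1 - 1 < N + 2 ∧ 1 ≤ (blkOf x).1)]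
  have h1 : Lcal P L i x c = L i (stOf x) c := by
    conv_lhs => rw [← emb_blkOf_stOf P.nd x]
    exact Lcal_emb_ge P L i (blkOf x) (stOf x) c (by omega)
  rw [h1, Lcal_emb_ge P L i ⟨(blkOf x).1 - 1, by omega⟩ (stOf x) c (by simp only []; omega),
    sub_self]

/-- cut predicate: block index at most `i` -/
def cutP (nd : Fin (N+1) → ℕ) (i : Fin (N+1)) : BigIx nd → Prop :=
  fun x => (blkOf x).1 ≤ i.1

instance (nd : Fin (N+1) → ℕ) (i : Fin (N+1)) : DecidablePred (cutP nd i) :=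
  fun _ => Nat.decLe _ _

end Core2

section MC

lemma mc_mul {α β γ : Type*} [Fintype β] (A : Matrix α β ℝ) (B : Matrix β γ ℝ) :
    mc (A * B) = mc A * mc B := by
  ext x y
  simp only [mc, Matrix.map_apply, Matrix.mul_apply]
  push_cast
  rfl

lemma mc_one {α : Type*} [Fintype α] [DecidableEq α] : mc (1 : Matrix α α ℝ) = 1 := by
  ext x y
  simp only [mc, Matrix.map_apply, Matrix.one_apply]
  split_ifs <;> norm_num

end MC

end TriLQG


namespace TriLQG

/-- for arbitrary gains, `𝒦_i (sI − 𝒜)⁻¹ ℒ_i = 0` (the identity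
`P′_{i,i} = 0`). -/
theorem stmt10 {N : ℕ} (P : Plant N)
    (hdim : ∀ k : Fin (N+1), 0 < P.nd k ∧ 0 < P.md k ∧ 0 < P.pd k)
    (K : KGains P) (L : LGains P) (i : Fin (N+1))
    (s : ℂ) (hs : s ∉ spectrum ℂ (mc (Acal P K L))) :
    mc (Kcal P K i) * (s • 1 - mc (Acal P K L))⁻¹ * mc (Lcal P L i) = 0 := by
  have hUnit : IsUnit (s • (1 : Matrix (BigIx P.nd) (BigIx P.nd) ℂ) - mc (Acal P K L)) := by
    by_contra hc
    apply hs
    rw [spectrum.mem_iff, Algebra.algebraMap_eq_smul_one]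
    exact hc
  set S : Matrix (BigIx P.nd) (BigIx P.nd) ℂ
    := s • (1 : Matrix (BigIx P.nd) (BigIx P.nd) ℂ) - mc (Acal P K L) with hSdef
  have hdetS : IsUnit S.det := (Matrix.isUnit_iff_isUnit_det _).mp hUnit
  set Z : Matrix (BigIx P.nd) (BigIx P.nd) ℂ := mc (zetaBar P.nd) with hZ
  set U : Matrix (BigIx P.nd) (BigIx P.nd) ℂ := mc (muBar P.nd) with hU
  have hZU : Z * U = 1 := by rw [hZ, hU, ← mc_mul, zetaBar_mul_muBar, mc_one]
  have hUZ : U * Z = 1 := by rw [hZ, hU, ← mc_mul, muBar_mul_zetaBar, mc_one]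
  set Mm : Matrix (BigIx P.nd) (BigIx P.nd) ℂ := U * S * Z with hM
  have hdetM : IsUnit Mm.det := by
    rw [hM, Matrix.det_mul, Matrix.det_mul]
    have h1 : U.det * Z.det = 1 := by rw [← Matrix.det_mul, hUZ, Matrix.det_one]
    exact ((IsUnit.of_mul_eq_one _ h1).mul hdetS).mul
      (IsUnit.of_mul_eq_one _ (by rwa [mul_comm] at h1))
  have hSinv : S⁻¹ = Z * Mm⁻¹ * U := by
    apply Matrix.inv_eq_right_inv
    have hSfac : S = Z * Mm * U := by
      rw [hM]
      calc S = (Z * U) * S * (Z * U) := by rw [hZU, Matrix.one_mul, Matrix.mul_one]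
        _ = Z * (U * S * Z) * U := by simp only [Matrix.mul_assoc]
    rw [hSfac]
    have e1 : Z * Mm * U * (Z * Mm⁻¹ * U) = Z * (Mm * ((U * Z) * (Mm⁻¹ * U))) := by
      simp only [Matrix.mul_assoc]
    rw [e1, hUZ, Matrix.one_mul, ← Matrix.mul_assoc Mm Mm⁻¹ U,
      Matrix.mul_nonsing_inv _ hdetM, Matrix.one_mul, hZU]
  have hMtri : ∀ x y, ¬ cutP P.nd i x → cutP P.nd i y → Mm x y = 0 := by
    intro x y hx hy
    have hxy : (blkOf y).1 < (blkOf x).1 := by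
      simp only [cutP] at hx hy
      omega
    have hMeq : Mm = s • (1 : Matrix (BigIx P.nd) (BigIx P.nd) ℂ)
        - mc (muBar P.nd * (Acal P K L * zetaBar P.nd)) := by
      have e1 : U * (s • (1 : Matrix (BigIx P.nd) (BigIx P.nd) ℂ)) * Z
          = s • (1 : Matrix (BigIx P.nd) (BigIx P.nd) ℂ) := by
        rw [Matrix.mul_smul, Matrix.mul_one, Matrix.smul_mul, hUZ]
      have e2 : U * mc (Acal P K L) * Z
          = mc (muBar P.nd * (Acal P K L * zetaBar P.nd)) := by
        rw [mc_mul, mc_mul, hU, hZ, Matrix.mul_assoc]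
      rw [hM, hSdef, Matrix.mul_sub, Matrix.sub_mul, e1, e2]
    rw [hMeq]
    simp only [Matrix.sub_apply, Matrix.smul_apply, Matrix.one_apply]
    rw [if_neg (by intro hh; subst hh; exact hx hy)]
    have h0 : (muBar P.nd * (Acal P K L * zetaBar P.nd)) x y = 0 :=
      muAzeta_tri P K L x y hxy
    simp only [mc, Matrix.map_apply, h0, Complex.ofReal_zero, smul_zero, sub_zero]
  have hMinvtri : ∀ x y, ¬ cutP P.nd i x → cutP P.nd i y → Mm⁻¹ x y = 0 := by
    intro x y hx hy
    letI dE : DecidableEq ({a // cutP P.nd i a} ⊕ {a // ¬ cutP P.nd i a}) :=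
      instDecidableEqSum
    let e : {a // cutP P.nd i a} ⊕ {a // ¬ cutP P.nd i a} ≃ BigIx P.nd
      := Equiv.sumCompl (cutP P.nd i)
    have hsub : (Mm.submatrix e e)⁻¹ = Mm⁻¹.submatrix e e := Matrix.inv_submatrix_equiv Mm e e
    set A1 := (Mm.submatrix e e).toBlocks₁₁ with hA1
    set B1 := (Mm.submatrix e e).toBlocks₁₂ with hB1
    set D1 := (Mm.submatrix e e).toBlocks₂₂ with hD1
    have hzero : (Mm.submatrix e e).toBlocks₂₁ = 0 := by
      ext u v
      simp only [Matrix.toBlocks₂₁, Matrix.of_apply, Matrix.submatrix_apply,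
        Matrix.zero_apply]
      have h1 : e (Sum.inr u) = u.1 := rfl
      have h2 : e (Sum.inl v) = v.1 := rfl
      rw [h1, h2]
      exact hMtri u.1 v.1 u.2 v.2
    have hblocks : Mm.submatrix e e = Matrix.fromBlocks A1 B1 0 D1 := by
      rw [hA1, hB1, hD1, ← hzero, Matrix.fromBlocks_toBlocks]
    have hdet1 : A1.det * D1.det = Mm.det := by
      rw [← Matrix.det_fromBlocks_zero₂₁, ← hblocks, Matrix.det_submatrix_equiv_self]
    have hdA : IsUnit A1.det ∧ IsUnit D1.det := by
      constructor
      · exact isUnit_of_mul_isUnit_left (by rw [hdet1]; exact hdetM)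
      · exact isUnit_of_mul_isUnit_right (by rw [hdet1]; exact hdetM)
    have hinvF : (Matrix.fromBlocks A1 B1 0 D1)⁻¹
        = Matrix.fromBlocks A1⁻¹ (-(A1⁻¹ * B1 * D1⁻¹)) 0 D1⁻¹ := by
      apply Matrix.inv_eq_right_inv
      rw [Matrix.fromBlocks_multiply]
      have e1 : A1 * A1⁻¹ = 1 := Matrix.mul_nonsing_inv _ hdA.1
      have e2 : D1 * D1⁻¹ = 1 := Matrix.mul_nonsing_inv _ hdA.2
      have e3 : A1 * -(A1⁻¹ * B1 * D1⁻¹) + B1 * D1⁻¹ = 0 := by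
        rw [Matrix.mul_neg, ← Matrix.mul_assoc A1 (A1⁻¹ * B1) D1⁻¹,
          ← Matrix.mul_assoc A1 A1⁻¹ B1, e1, Matrix.one_mul, neg_add_cancel]
      simp only [Matrix.mul_zero, Matrix.zero_mul, add_zero, zero_add, e1, e2, e3,
        Matrix.fromBlocks_one]
    have hfin : Mm⁻¹.submatrix e e (Sum.inr ⟨x, hx⟩) (Sum.inl ⟨y, hy⟩) = 0 := by
      rw [← hsub, hblocks, hinvF]
      simp [Matrix.fromBlocks_apply₂₁]
    have h1 : e (Sum.inr ⟨x, hx⟩) = x := rfl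
    have h2 : e (Sum.inl ⟨y, hy⟩) = y := rfl
    rw [Matrix.submatrix_apply, h1, h2] at hfin
    exact hfin
  rw [hSinv]
  have hgoal : mc (Kcal P K i) * (Z * Mm⁻¹ * U) * mc (Lcal P L i)
      = mc (Kcal P K i * zetaBar P.nd) * Mm⁻¹ * mc (muBar P.nd * Lcal P L i) := by
    rw [mc_mul, mc_mul, ← hZ, ← hU]
    simp only [Matrix.mul_assoc]
  rw [hgoal]
  ext r c
  rw [Matrix.mul_apply, Matrix.zero_apply]
  apply Finset.sum_eq_zero
  intro y _
  by_cases hy : cutP P.nd i y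
  · rw [Matrix.mul_apply]
    rw [Finset.sum_eq_zero, zero_mul]
    intro x _
    by_cases hx : cutP P.nd i x
    · have h0 : (Kcal P K i * zetaBar P.nd) r x = 0 := Ksupp P K i r x hx
      simp only [mc, Matrix.map_apply, h0, Complex.ofReal_zero, zero_mul]
    · rw [hMinvtri x y hx hy, mul_zero]
  · have h0 : (muBar P.nd * Lcal P L i) y c = 0 := by
      apply Lsupp P L i y c
      simp only [cutP] at hy
      omega
    simp only [mc, Matrix.map_apply, h0, Complex.ofReal_zero, mul_zero]

end TriLQG
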